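/- Fix x ∈ (0, 1). For 0 < q < 1, let K(q) := ∫₀¹ dt/√((1−t²)(1−q²t²)). Suppose ε ∈ (0,1) and s : (0,1) → ℝ is a function such that for every q ∈ (0, ε) one has −1 < s(q) ≤ 0 and ∫₀^{s(q)} dt/√((1−t²)(1−(1−q²)t²)) = (2K(q)/π)·log x. Then s(q) tends to (x² − 1)/(x² + 1) as q → 0⁺. -/

import Mathlib

open Filter Topology

open MeasureTheory intervalIntegral Set

private lemma aux_II0 : IntervalIntegrable (fun t : ℝ => 1 / Real.sqrt (1 - t ^ 2))
    MeasureTheory.volume 0 1 := by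
  have hbase : IntervalIntegrable (fun t : ℝ => (1 - t) ^ (-(1:ℝ)/2)) MeasureTheory.volume 0 1 := by
    have := (intervalIntegral.intervalIntegrable_rpow' (a := 0) (b := 1) (r := -(1:ℝ)/2)
      (by norm_num)).comp_sub_left 1
    simpa using this.symm
  apply hbase.mono_fun
  · exact (measurable_const.div
      ((measurable_const.sub (measurable_id'.pow_const 2)).sqrt)).aestronglyMeasurable
  · filter_upwards [MeasureTheory.ae_restrict_mem measurableSet_uIoc] with t ht
    rw [Set.uIoc_of_le (by norm_num : (0:ℝ) ≤ 1)] at ht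
    obtain ⟨ht0, ht1⟩ := ht
    have h1t : 0 ≤ 1 - t := by linarith
    rw [Real.norm_eq_abs, Real.norm_eq_abs, abs_of_nonneg (by positivity),
      abs_of_nonneg (by positivity)]
    rw [show (-(1:ℝ)/2) = -(1/2) by norm_num, Real.rpow_neg h1t, ← Real.sqrt_eq_rpow]
    rcases eq_or_lt_of_le ht1 with h | h
    · subst h; norm_num
    · have h2 : 0 < 1 - t := by linarith
      have hle : Real.sqrt (1 - t) ≤ Real.sqrt (1 - t ^ 2) := by
        apply Real.sqrt_le_sqrt; nlinarith
      rw [← one_div]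
      exact one_div_le_one_div_of_le (Real.sqrt_pos.mpr h2) hle

private lemma aux_int0 : ∫ t in (0:ℝ)..1, 1 / Real.sqrt (1 - t ^ 2) = Real.pi / 2 := by
  set f : ℝ → ℝ := fun t => 1 / Real.sqrt (1 - t ^ 2) with hf
  set P : ℝ → ℝ := fun b => ∫ t in (0:ℝ)..b, f t with hP
  have hint : IntegrableOn f (Set.uIcc (0:ℝ) 1) MeasureTheory.volume := by
    rw [Set.uIcc_of_le (by norm_num : (0:ℝ) ≤ 1)]
    exact (intervalIntegrable_iff_integrableOn_Icc_of_le (by norm_num)).mp aux_II0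
  have hcont := intervalIntegral.continuousOn_primitive_interval hint
  set l : Filter ℝ := 𝓝[Set.Ico (0:ℝ) 1] 1 with hl
  have hne : l.NeBot := by
    apply mem_closure_iff_nhdsWithin_neBot.mp
    rw [closure_Ico (by norm_num : (0:ℝ) ≠ 1)]
    exact ⟨by norm_num, le_refl 1⟩
  have h1 : Tendsto P l (𝓝 (P 1)) := by
    have := (hcont 1 (by rw [Set.uIcc_of_le (by norm_num : (0:ℝ) ≤ 1)]; exact ⟨by norm_num, le_refl 1⟩))
    exact this.mono_left (nhdsWithin_mono _ (by
      rw [Set.uIcc_of_le (by norm_num : (0:ℝ) ≤ 1)]; exact Set.Ico_subset_Icc_self))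
  have heq : ∀ᶠ b in l, P b = Real.arcsin b := by
    filter_upwards [self_mem_nhdsWithin] with b hb
    obtain ⟨hb0, hb1⟩ := hb
    have hderiv : ∀ t ∈ Set.uIcc (0:ℝ) b, HasDerivAt Real.arcsin (f t) t := by
      intro t ht
      rw [Set.uIcc_of_le hb0] at ht
      exact Real.hasDerivAt_arcsin (by intro h; rw [h] at ht; linarith [ht.1])
        (by intro h; rw [h] at ht; linarith [ht.2])
    have hii : IntervalIntegrable f MeasureTheory.volume 0 b :=
      aux_II0.mono_set (by
        rw [Set.uIcc_of_le hb0, Set.uIcc_of_le (by norm_num : (0:ℝ) ≤ 1)]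
        exact Set.Icc_subset_Icc (le_refl 0) hb1.le)
    have := intervalIntegral.integral_eq_sub_of_hasDerivAt hderiv hii
    simpa [hP, Real.arcsin_zero] using this
  have h2 : Tendsto Real.arcsin l (𝓝 (Real.pi/2)) := by
    rw [← Real.arcsin_one]
    exact (Real.continuous_arcsin.tendsto 1).mono_left nhdsWithin_le_nhds
  exact tendsto_nhds_unique (h1.congr' heq) h2

private lemma contOnKer {m : ℝ} (hm : 0 ≤ m) (hm1 : m ≤ 1) {a b : ℝ}
    (h : Set.uIcc a b ⊆ Set.Ioo (-1:ℝ) 1) :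
    ContinuousOn (fun t : ℝ => 1 / Real.sqrt ((1 - t ^ 2) * (1 - m * t ^ 2))) (Set.uIcc a b) := by
  apply ContinuousOn.div continuousOn_const
  · exact (Real.continuous_sqrt.comp (by continuity)).continuousOn
  · intro t ht
    obtain ⟨ht1, ht2⟩ := h ht
    have h1 : 0 < 1 - t ^ 2 := by nlinarith
    have h2 : 0 < 1 - m * t ^ 2 := by nlinarith [sq_nonneg t]
    exact Real.sqrt_ne_zero'.mpr (mul_pos h1 h2)

private lemma contOnInv {a b : ℝ} (h : Set.uIcc a b ⊆ Set.Ioo (-1:ℝ) 1) :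
    ContinuousOn (fun t : ℝ => 1 / (1 - t ^ 2)) (Set.uIcc a b) := by
  apply ContinuousOn.div continuousOn_const
    ((continuous_const.sub (continuous_pow 2)).continuousOn)
  intro t ht
  obtain ⟨ht1, ht2⟩ := h ht
  have h1 : 0 < 1 - t ^ 2 := by nlinarith
  exact ne_of_gt h1

private lemma Gval {c : ℝ} (hc1 : -1 < c) (hc2 : c < 1) :
    ∫ t in (0:ℝ)..c, 1 / (1 - t ^ 2) = (Real.log (1 + c) - Real.log (1 - c)) / 2 := by
  have hsub : Set.uIcc (0:ℝ) c ⊆ Set.Ioo (-1:ℝ) 1 := by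
    intro t ht
    rcases Set.mem_uIcc.mp ht with ⟨h1, h2⟩ | ⟨h1, h2⟩ <;> exact ⟨by linarith, by linarith⟩
  have hderiv : ∀ t ∈ Set.uIcc (0:ℝ) c,
      HasDerivAt (fun u => (Real.log (1 + u) - Real.log (1 - u)) / 2) (1 / (1 - t ^ 2)) t := by
    intro t ht
    obtain ⟨h1, h2⟩ := hsub ht
    have d1 : HasDerivAt (fun u : ℝ => Real.log (1 + u)) (1 / (1 + t)) t := by
      have hd : HasDerivAt (fun u : ℝ => 1 + u) 1 t := (hasDerivAt_id t).const_add 1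
      simpa using hd.log (by linarith)
    have d2 : HasDerivAt (fun u : ℝ => Real.log (1 - u)) (-1 / (1 - t)) t := by
      have hd : HasDerivAt (fun u : ℝ => 1 - u) (-1) t := (hasDerivAt_id t).const_sub 1
      simpa using hd.log (by linarith)
    have := (d1.sub d2).div_const 2
    refine this.congr_deriv ?_
    have e1 : (1:ℝ) + t ≠ 0 := by linarith
    have e2 : (1:ℝ) - t ≠ 0 := by linarith
    have e3 : (1:ℝ) - t ^ 2 ≠ 0 := by nlinarith
    field_simp
    ring
  have hint : IntervalIntegrable (fun t : ℝ => 1 / (1 - t ^ 2)) MeasureTheory.volume 0 c :=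
    (contOnInv hsub).intervalIntegrable
  have := intervalIntegral.integral_eq_sub_of_hasDerivAt hderiv hint
  simpa using this

private lemma Gstrict {u v : ℝ} (hu : -1 < u) (huv : u < v) (hv : v < 1) :
    (Real.log (1 + u) - Real.log (1 - u)) / 2 < (Real.log (1 + v) - Real.log (1 - v)) / 2 := by
  have l1 : Real.log (1 + u) < Real.log (1 + v) := Real.log_lt_log (by linarith) (by linarith)
  have l2 : Real.log (1 - v) < Real.log (1 - u) := Real.log_lt_log (by linarith) (by linarith)
  linarith

private lemma comp_lower {q a : ℝ} (hq0 : 0 < q) (hq1 : q < 1) (ha : -1 < a) (ha0 : a ≤ 0) :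
    (∫ t in (0:ℝ)..a, 1 / (1 - t ^ 2)) ≤
    ∫ t in (0:ℝ)..a, 1 / Real.sqrt ((1 - t ^ 2) * (1 - (1 - q ^ 2) * t ^ 2)) := by
  have hsub : Set.uIcc a 0 ⊆ Set.Ioo (-1:ℝ) 1 := by
    intro t ht
    rcases Set.mem_uIcc.mp ht with ⟨h1, h2⟩ | ⟨h1, h2⟩ <;> exact ⟨by linarith, by linarith⟩
  have hm0 : (0:ℝ) ≤ 1 - q ^ 2 := by nlinarith
  have hm1 : (1:ℝ) - q ^ 2 ≤ 1 := by nlinarith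
  have key : (∫ t in a..(0:ℝ), 1 / Real.sqrt ((1 - t ^ 2) * (1 - (1 - q ^ 2) * t ^ 2))) ≤
      ∫ t in a..(0:ℝ), 1 / (1 - t ^ 2) := by
    apply intervalIntegral.integral_mono_on ha0
      ((contOnKer hm0 hm1 hsub).intervalIntegrable) ((contOnInv hsub).intervalIntegrable)
    intro t ht
    have htm : t ∈ Set.Ioo (-1:ℝ) 1 := hsub (by rw [Set.uIcc_of_le ha0]; exact ht)
    have h1 : 0 < 1 - t ^ 2 := by nlinarith [htm.1, htm.2]
    have hsq : 1 - t ^ 2 ≤ Real.sqrt ((1 - t ^ 2) * (1 - (1 - q ^ 2) * t ^ 2)) := by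
      have hpq : (1 - t ^ 2) ^ 2 ≤ (1 - t ^ 2) * (1 - (1 - q ^ 2) * t ^ 2) := by
        nlinarith [mul_nonneg h1.le (mul_nonneg (sq_nonneg q) (sq_nonneg t))]
      calc 1 - t ^ 2 = Real.sqrt ((1 - t ^ 2) ^ 2) := (Real.sqrt_sq h1.le).symm
        _ ≤ _ := Real.sqrt_le_sqrt hpq
    calc 1 / Real.sqrt ((1 - t ^ 2) * (1 - (1 - q ^ 2) * t ^ 2)) ≤ 1 / (1 - t ^ 2) :=
          one_div_le_one_div_of_le h1 hsq
      _ = 1 / (1 - t ^ 2) := rfl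
  have e1 := intervalIntegral.integral_symm (f := fun t : ℝ => 1 / (1 - t ^ 2))
    (μ := MeasureTheory.volume) a 0
  have e2 := intervalIntegral.integral_symm
    (f := fun t : ℝ => 1 / Real.sqrt ((1 - t ^ 2) * (1 - (1 - q ^ 2) * t ^ 2)))
    (μ := MeasureTheory.volume) a 0
  rw [e1, e2]
  linarith

private lemma comp_upper {q a : ℝ} (hq0 : 0 < q) (hq1 : q < 1) (ha : -1 < a) (ha0 : a ≤ 0) :
    (∫ t in (0:ℝ)..a, 1 / Real.sqrt ((1 - t ^ 2) * (1 - (1 - q ^ 2) * t ^ 2))) ≤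
      (∫ t in (0:ℝ)..a, 1 / (1 - t ^ 2)) / Real.sqrt (1 + q ^ 2 / (1 - a ^ 2)) := by
  have hsub : Set.uIcc a 0 ⊆ Set.Ioo (-1:ℝ) 1 := by
    intro t ht
    rcases Set.mem_uIcc.mp ht with ⟨h1, h2⟩ | ⟨h1, h2⟩ <;> exact ⟨by linarith, by linarith⟩
  have hm0 : (0:ℝ) ≤ 1 - q ^ 2 := by nlinarith
  have hm1 : (1:ℝ) - q ^ 2 ≤ 1 := by nlinarith
  have hva : 0 < 1 - a ^ 2 := by nlinarith
  set v : ℝ := q ^ 2 / (1 - a ^ 2) with hvdef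
  have hv0 : 0 ≤ v := by positivity
  have hv : v * (1 - a ^ 2) = q ^ 2 := div_mul_cancel₀ _ (ne_of_gt hva)
  set r : ℝ := Real.sqrt (1 + v) with hrdef
  have hrpos : 0 < r := Real.sqrt_pos.mpr (by linarith)
  have key : (∫ t in a..(0:ℝ), 1 / (1 - t ^ 2)) ≤
      ∫ t in a..(0:ℝ), r * (1 / Real.sqrt ((1 - t ^ 2) * (1 - (1 - q ^ 2) * t ^ 2))) := by
    apply intervalIntegral.integral_mono_on ha0 ((contOnInv hsub).intervalIntegrable)
      ((continuousOn_const.mul (contOnKer hm0 hm1 hsub)).intervalIntegrable)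
    intro t ht
    have htm : t ∈ Set.Ioo (-1:ℝ) 1 := hsub (by rw [Set.uIcc_of_le ha0]; exact ht)
    have hP : 0 < 1 - t ^ 2 := by nlinarith [htm.1, htm.2]
    have hQ : 0 < 1 - (1 - q ^ 2) * t ^ 2 := by nlinarith [sq_nonneg t, htm.1, htm.2]
    have hta : t ^ 2 ≤ a ^ 2 := by nlinarith [ht.1, ht.2]
    have hkey : 0 ≤ (1 - t ^ 2) * (v * ((1 - t ^ 2) - (1 - a ^ 2) * t ^ 2)) := by
      apply mul_nonneg hP.le (mul_nonneg hv0 ?_)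
      nlinarith [sq_nonneg (1 - a ^ 2), sq_nonneg t]
    have h2 : (1 - t ^ 2) * t ^ 2 * (v * (1 - a ^ 2)) = (1 - t ^ 2) * t ^ 2 * q ^ 2 := by
      rw [hv]
    have expand : (1 + v) * (1 - t ^ 2) ^ 2 - (1 - t ^ 2) * (1 - (1 - q ^ 2) * t ^ 2) =
        (1 - t ^ 2) * (v * ((1 - t ^ 2) - (1 - a ^ 2) * t ^ 2)) +
          ((1 - t ^ 2) * t ^ 2 * (v * (1 - a ^ 2)) - (1 - t ^ 2) * t ^ 2 * q ^ 2) := by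
      ring
    have hprod : (1 - t ^ 2) * (1 - (1 - q ^ 2) * t ^ 2) ≤ (1 + v) * (1 - t ^ 2) ^ 2 := by
      linarith [hkey, h2, expand]
    have hs2 : Real.sqrt ((1 - t ^ 2) * (1 - (1 - q ^ 2) * t ^ 2)) ≤ r * (1 - t ^ 2) := by
      have e : Real.sqrt ((1 + v) * (1 - t ^ 2) ^ 2) = r * (1 - t ^ 2) := by
        rw [Real.sqrt_mul (by linarith), Real.sqrt_sq hP.le]
      calc Real.sqrt ((1 - t ^ 2) * (1 - (1 - q ^ 2) * t ^ 2))
          ≤ Real.sqrt ((1 + v) * (1 - t ^ 2) ^ 2) := Real.sqrt_le_sqrt hprod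
        _ = r * (1 - t ^ 2) := e
    have hPQ : 0 < Real.sqrt ((1 - t ^ 2) * (1 - (1 - q ^ 2) * t ^ 2)) :=
      Real.sqrt_pos.mpr (mul_pos hP hQ)
    show 1 / (1 - t ^ 2) ≤ r * (1 / Real.sqrt ((1 - t ^ 2) * (1 - (1 - q ^ 2) * t ^ 2)))
    rw [show r * (1 / Real.sqrt ((1 - t ^ 2) * (1 - (1 - q ^ 2) * t ^ 2))) =
      r / Real.sqrt ((1 - t ^ 2) * (1 - (1 - q ^ 2) * t ^ 2)) by ring,
      div_le_div_iff₀ hP hPQ]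
    linarith [hs2]
  rw [intervalIntegral.integral_symm (a := a) (b := 0),
    intervalIntegral.integral_symm (a := a) (b := 0) (f := fun t : ℝ => 1 / (1 - t ^ 2)),
    neg_div]
  apply neg_le_neg
  rw [div_le_iff₀ hrpos]
  have e3 : (∫ t in a..(0:ℝ), r * (1 / Real.sqrt ((1 - t ^ 2) * (1 - (1 - q ^ 2) * t ^ 2)))) =
      r * ∫ t in a..(0:ℝ), 1 / Real.sqrt ((1 - t ^ 2) * (1 - (1 - q ^ 2) * t ^ 2)) :=
    intervalIntegral.integral_const_mul r _
  nlinarith [key, e3,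
    mul_comm r (∫ t in a..(0:ℝ), 1 / Real.sqrt ((1 - t ^ 2) * (1 - (1 - q ^ 2) * t ^ 2)))]

private lemma Kint {q : ℝ} (hq0 : 0 < q) (hq1 : q < 1) :
    IntervalIntegrable (fun t : ℝ => 1 / Real.sqrt ((1 - t ^ 2) * (1 - q ^ 2 * t ^ 2)))
      MeasureTheory.volume 0 1 := by
  have hw : 0 < Real.sqrt (1 - q ^ 2) := Real.sqrt_pos.mpr (by nlinarith)
  apply (aux_II0.const_mul (1 / Real.sqrt (1 - q ^ 2))).mono_fun
  · exact (measurable_const.div (((measurable_const.sub (measurable_id'.pow_const 2)).mul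
      (measurable_const.sub (measurable_const.mul (measurable_id'.pow_const 2)))).sqrt)).aestronglyMeasurable
  · filter_upwards [MeasureTheory.ae_restrict_mem measurableSet_uIoc] with t ht
    rw [Set.uIoc_of_le (by norm_num : (0:ℝ) ≤ 1)] at ht
    obtain ⟨ht0, ht1⟩ := ht
    rw [Real.norm_eq_abs, Real.norm_eq_abs, abs_of_nonneg (by positivity),
      abs_of_nonneg (by positivity)]
    rcases eq_or_lt_of_le ht1 with h | h
    · subst h; norm_num
    · have h1 : 0 < 1 - t ^ 2 := by nlinarith
      have h2 : (1 - t ^ 2) * (1 - q ^ 2) ≤ (1 - t ^ 2) * (1 - q ^ 2 * t ^ 2) := by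
        nlinarith [mul_nonneg (mul_nonneg h1.le (sq_nonneg q)) h1.le]
      have h3 : 0 < Real.sqrt ((1 - t ^ 2) * (1 - q ^ 2)) :=
        Real.sqrt_pos.mpr (mul_pos h1 (by nlinarith))
      calc 1 / Real.sqrt ((1 - t ^ 2) * (1 - q ^ 2 * t ^ 2))
          ≤ 1 / Real.sqrt ((1 - t ^ 2) * (1 - q ^ 2)) :=
            one_div_le_one_div_of_le h3 (Real.sqrt_le_sqrt h2)
        _ = 1 / Real.sqrt (1 - q ^ 2) * (1 / Real.sqrt (1 - t ^ 2)) := by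
            rw [Real.sqrt_mul h1.le]
            field_simp

private lemma K_lb {q : ℝ} (hq0 : 0 < q) (hq1 : q < 1) :
    Real.pi / 2 ≤ ∫ t in (0:ℝ)..1, 1 / Real.sqrt ((1 - t ^ 2) * (1 - q ^ 2 * t ^ 2)) := by
  rw [← aux_int0]
  apply intervalIntegral.integral_mono_on (by norm_num) aux_II0 (Kint hq0 hq1)
  intro t ht
  obtain ⟨ht0, ht1⟩ := ht
  rcases eq_or_lt_of_le ht1 with h | h
  · subst h; norm_num
  · have h1 : 0 < 1 - t ^ 2 := by nlinarith
    have h2 : 0 < 1 - q ^ 2 * t ^ 2 := by nlinarith [sq_nonneg (q * t), sq_nonneg q, sq_nonneg t]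
    apply one_div_le_one_div_of_le (Real.sqrt_pos.mpr (mul_pos h1 h2))
    apply Real.sqrt_le_sqrt
    nlinarith [mul_nonneg (sq_nonneg q) (sq_nonneg t)]

private lemma K_ub {q : ℝ} (hq0 : 0 < q) (hq1 : q < 1) :
    (∫ t in (0:ℝ)..1, 1 / Real.sqrt ((1 - t ^ 2) * (1 - q ^ 2 * t ^ 2))) ≤
      Real.pi / 2 / Real.sqrt (1 - q ^ 2) := by
  have hw : 0 < Real.sqrt (1 - q ^ 2) := Real.sqrt_pos.mpr (by nlinarith)
  have hmono := intervalIntegral.integral_mono_on (by norm_num : (0:ℝ) ≤ 1) (Kint hq0 hq1)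
    (aux_II0.const_mul (1 / Real.sqrt (1 - q ^ 2))) ?_
  · have e : (∫ t in (0:ℝ)..1, 1 / Real.sqrt (1 - q ^ 2) * (1 / Real.sqrt (1 - t ^ 2))) =
        1 / Real.sqrt (1 - q ^ 2) * (Real.pi / 2) := by
      rw [intervalIntegral.integral_const_mul, aux_int0]
    rw [e] at hmono
    calc (∫ t in (0:ℝ)..1, 1 / Real.sqrt ((1 - t ^ 2) * (1 - q ^ 2 * t ^ 2)))
        ≤ 1 / Real.sqrt (1 - q ^ 2) * (Real.pi / 2) := hmono
      _ = Real.pi / 2 / Real.sqrt (1 - q ^ 2) := by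
          rw [mul_comm]
          exact (div_eq_mul_one_div _ _).symm
  · intro t ht
    obtain ⟨ht0, ht1⟩ := ht
    rcases eq_or_lt_of_le ht1 with h | h
    · subst h; norm_num
    · have h1 : 0 < 1 - t ^ 2 := by nlinarith
      have h2 : (1 - t ^ 2) * (1 - q ^ 2) ≤ (1 - t ^ 2) * (1 - q ^ 2 * t ^ 2) := by
        nlinarith [mul_nonneg (mul_nonneg h1.le (sq_nonneg q)) h1.le]
      have h3 : 0 < Real.sqrt ((1 - t ^ 2) * (1 - q ^ 2)) :=
        Real.sqrt_pos.mpr (mul_pos h1 (by nlinarith))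
      calc 1 / Real.sqrt ((1 - t ^ 2) * (1 - q ^ 2 * t ^ 2))
          ≤ 1 / Real.sqrt ((1 - t ^ 2) * (1 - q ^ 2)) :=
            one_div_le_one_div_of_le h3 (Real.sqrt_le_sqrt h2)
        _ = 1 / Real.sqrt (1 - q ^ 2) * (1 / Real.sqrt (1 - t ^ 2)) := by
            rw [Real.sqrt_mul h1.le]
            field_simp

set_option maxHeartbeats 1000000 in
/-- Section 5, Case (iv), limit (5.3): with `K(q) = ∫₀¹ dt/√((1-t²)(1-q²t²))`, if
`s(q) ∈ (-1, 0]` satisfies `∫₀^{s(q)} dt/√((1-t²)(1-(1-q²)t²)) = (2K(q)/π) log x`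
for all `q ∈ (0, ε)`, then `s(q) → (x²-1)/(x²+1)` as `q → 0⁻`. -/
theorem stmt12 (x : ℝ) (hx : 0 < x) (hx1 : x < 1) (ε : ℝ) (hε : 0 < ε) (hε1 : ε < 1)
    (s : ℝ → ℝ)
    (hs : ∀ q ∈ Set.Ioo (0 : ℝ) ε,
      -1 < s q ∧ s q ≤ 0 ∧
      (∫ t in (0 : ℝ)..(s q), 1 / Real.sqrt ((1 - t ^ 2) * (1 - (1 - q ^ 2) * t ^ 2))) =
        (2 * (∫ t in (0 : ℝ)..1, 1 / Real.sqrt ((1 - t ^ 2) * (1 - q ^ 2 * t ^ 2))) / Real.pi) *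
          Real.log x) :
    Tendsto s (𝓝[>] (0 : ℝ)) (𝓝 ((x ^ 2 - 1) / (x ^ 2 + 1))) := by
  have hL : Real.log x < 0 := Real.log_neg hx hx1
  have hx2 : (0:ℝ) < x ^ 2 + 1 := by positivity
  set sstar : ℝ := (x ^ 2 - 1) / (x ^ 2 + 1) with hsstar
  have hstar1 : -1 < sstar := by
    rw [hsstar, lt_div_iff₀ hx2]
    nlinarith
  have hstar0 : sstar < 0 := div_neg_of_neg_of_pos (by nlinarith) hx2
  have hGstar : (Real.log (1 + sstar) - Real.log (1 - sstar)) / 2 = Real.log x := by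
    have e1 : 1 + sstar = 2 * x ^ 2 / (x ^ 2 + 1) := by
      rw [hsstar]; field_simp; ring
    have e2 : 1 - sstar = 2 / (x ^ 2 + 1) := by
      rw [hsstar]; field_simp; ring
    rw [e1, e2, Real.log_div (by positivity) (by positivity),
      Real.log_div (by norm_num) (by positivity),
      Real.log_mul (by norm_num) (by positivity), Real.log_pow]
    push_cast
    ring
  have hmem : Set.Ioo (0:ℝ) ε ∈ 𝓝[>] (0:ℝ) :=
    Ioo_mem_nhdsGT_of_mem ⟨le_refl 0, hε⟩
  rw [tendsto_order]
  constructor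
  · -- lower bound
    intro a ha
    set s0 : ℝ := max a ((-1 + sstar) / 2) with hs0def
    have hs0a : a ≤ s0 := le_max_left _ _
    have hs0m1 : -1 < s0 := lt_of_lt_of_le (by linarith) (le_max_right _ _)
    have hs0star : s0 < sstar := max_lt ha (by linarith)
    have hs00 : s0 < 0 := lt_trans hs0star hstar0
    have hvs0 : (0:ℝ) < 1 - s0 ^ 2 := by nlinarith
    set G0 : ℝ := (Real.log (1 + s0) - Real.log (1 - s0)) / 2 with hG0def
    have hGlt : G0 < Real.log x := by
      rw [← hGstar]
      exact Gstrict hs0m1 hs0star (by linarith)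
    have hT1 : Tendsto (fun q : ℝ => G0 / Real.sqrt (1 + q ^ 2 / (1 - s0 ^ 2)))
        (𝓝[>] (0:ℝ)) (𝓝 G0) := by
      have hc : Continuous fun q : ℝ => Real.sqrt (1 + q ^ 2 / (1 - s0 ^ 2)) :=
        Real.continuous_sqrt.comp (continuous_const.add ((continuous_pow 2).div_const _))
      have h0 : Tendsto (fun q : ℝ => G0 / Real.sqrt (1 + q ^ 2 / (1 - s0 ^ 2)))
          (𝓝 (0:ℝ)) (𝓝 (G0 / Real.sqrt (1 + 0 ^ 2 / (1 - s0 ^ 2)))) := by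
        apply Tendsto.div tendsto_const_nhds (hc.tendsto 0)
        norm_num
      have : G0 / Real.sqrt (1 + 0 ^ 2 / (1 - s0 ^ 2)) = G0 := by norm_num
      rw [this] at h0
      exact h0.mono_left nhdsWithin_le_nhds
    have hT2 : Tendsto (fun q : ℝ => 1 / Real.sqrt (1 - q ^ 2) * Real.log x)
        (𝓝[>] (0:ℝ)) (𝓝 (Real.log x)) := by
      have hc : Continuous fun q : ℝ => Real.sqrt (1 - q ^ 2) :=
        Real.continuous_sqrt.comp (continuous_const.sub (continuous_pow 2))
      have h0 : Tendsto (fun q : ℝ => 1 / Real.sqrt (1 - q ^ 2) * Real.log x)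
          (𝓝 (0:ℝ)) (𝓝 (1 / Real.sqrt (1 - 0 ^ 2) * Real.log x)) := by
        apply Tendsto.mul ?_ tendsto_const_nhds
        apply Tendsto.div tendsto_const_nhds (hc.tendsto 0)
        norm_num
      have : 1 / Real.sqrt (1 - 0 ^ 2) * Real.log x = Real.log x := by norm_num
      rw [this] at h0
      exact h0.mono_left nhdsWithin_le_nhds
    filter_upwards [hT1.eventually_lt hT2 hGlt, hmem] with q hlt hq
    obtain ⟨hq0, hqε⟩ := hq
    have hq1 : q < 1 := lt_trans hqε hε1
    obtain ⟨hsq1, hsq2, hsq3⟩ := hs q ⟨hq0, hqε⟩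
    have hw : 0 < Real.sqrt (1 - q ^ 2) := Real.sqrt_pos.mpr (by nlinarith)
    -- c(q) ≤ 1/√(1-q²)
    have hcub : 2 * (∫ t in (0:ℝ)..1, 1 / Real.sqrt ((1 - t ^ 2) * (1 - q ^ 2 * t ^ 2))) /
        Real.pi ≤ 1 / Real.sqrt (1 - q ^ 2) := by
      rw [div_le_iff₀ Real.pi_pos]
      have h' := (le_div_iff₀ hw).mp (K_ub hq0 hq1)
      have e : 1 / Real.sqrt (1 - q ^ 2) * Real.pi = Real.pi / Real.sqrt (1 - q ^ 2) := by
        ring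
      rw [e, le_div_iff₀ hw]
      nlinarith [h']
    -- F_q(s0) < F_q(s q)
    have hkey : (∫ t in (0:ℝ)..s0, 1 / Real.sqrt ((1 - t ^ 2) * (1 - (1 - q ^ 2) * t ^ 2))) <
        ∫ t in (0:ℝ)..(s q), 1 / Real.sqrt ((1 - t ^ 2) * (1 - (1 - q ^ 2) * t ^ 2)) := by
      have h1 := comp_upper hq0 hq1 hs0m1 hs00.le
      rw [Gval hs0m1 (by linarith), ← hG0def] at h1
      have h2 : 1 / Real.sqrt (1 - q ^ 2) * Real.log x ≤
          2 * (∫ t in (0:ℝ)..1, 1 / Real.sqrt ((1 - t ^ 2) * (1 - q ^ 2 * t ^ 2))) /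
            Real.pi * Real.log x :=
        mul_le_mul_of_nonpos_right hcub hL.le
      rw [← hsq3] at h2
      calc (∫ t in (0:ℝ)..s0, 1 / Real.sqrt ((1 - t ^ 2) * (1 - (1 - q ^ 2) * t ^ 2)))
          ≤ G0 / Real.sqrt (1 + q ^ 2 / (1 - s0 ^ 2)) := h1
        _ < 1 / Real.sqrt (1 - q ^ 2) * Real.log x := hlt
        _ ≤ _ := h2
    by_contra hcon
    push_neg at hcon
    have hsqs0 : s q ≤ s0 := le_trans hcon hs0a
    have hsub1 : Set.uIcc (0:ℝ) (s q) ⊆ Set.Ioo (-1:ℝ) 1 := by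
      intro t ht
      rcases Set.mem_uIcc.mp ht with ⟨h1, h2⟩ | ⟨h1, h2⟩ <;> exact ⟨by linarith, by linarith⟩
    have hsub2 : Set.uIcc (s q) s0 ⊆ Set.Ioo (-1:ℝ) 1 := by
      intro t ht
      rcases Set.mem_uIcc.mp ht with ⟨h1, h2⟩ | ⟨h1, h2⟩ <;> exact ⟨by linarith, by linarith⟩
    have hm0 : (0:ℝ) ≤ 1 - q ^ 2 := by nlinarith
    have hm1 : (1:ℝ) - q ^ 2 ≤ 1 := sub_le_self _ (sq_nonneg q)
    have hii1 : IntervalIntegrable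
        (fun t : ℝ => 1 / Real.sqrt ((1 - t ^ 2) * (1 - (1 - q ^ 2) * t ^ 2)))
        MeasureTheory.volume 0 (s q) := (contOnKer hm0 hm1 hsub1).intervalIntegrable
    have hii2 : IntervalIntegrable
        (fun t : ℝ => 1 / Real.sqrt ((1 - t ^ 2) * (1 - (1 - q ^ 2) * t ^ 2)))
        MeasureTheory.volume (s q) s0 := (contOnKer hm0 hm1 hsub2).intervalIntegrable
    have hadd := intervalIntegral.integral_add_adjacent_intervals hii1 hii2
    have hnn : 0 ≤ ∫ t in (s q)..s0,
        1 / Real.sqrt ((1 - t ^ 2) * (1 - (1 - q ^ 2) * t ^ 2)) := by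
      apply intervalIntegral.integral_nonneg hsqs0
      intro t ht
      positivity
    linarith
  · -- upper bound
    intro a ha
    filter_upwards [hmem] with q hq
    obtain ⟨hq0, hqε⟩ := hq
    have hq1 : q < 1 := lt_trans hqε hε1
    obtain ⟨hsq1, hsq2, hsq3⟩ := hs q ⟨hq0, hqε⟩
    have hclb : 1 ≤ 2 * (∫ t in (0:ℝ)..1, 1 / Real.sqrt ((1 - t ^ 2) * (1 - q ^ 2 * t ^ 2))) /
        Real.pi := by
      rw [le_div_iff₀ Real.pi_pos]
      linarith [K_lb hq0 hq1]
    have c1 : (Real.log (1 + s q) - Real.log (1 - s q)) / 2 ≤ Real.log x := by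
      calc (Real.log (1 + s q) - Real.log (1 - s q)) / 2
          = ∫ t in (0:ℝ)..(s q), 1 / (1 - t ^ 2) := (Gval hsq1 (by linarith)).symm
        _ ≤ ∫ t in (0:ℝ)..(s q),
              1 / Real.sqrt ((1 - t ^ 2) * (1 - (1 - q ^ 2) * t ^ 2)) :=
            comp_lower hq0 hq1 hsq1 hsq2
        _ = 2 * (∫ t in (0:ℝ)..1, 1 / Real.sqrt ((1 - t ^ 2) * (1 - q ^ 2 * t ^ 2))) /
              Real.pi * Real.log x := hsq3
        _ ≤ 1 * Real.log x := mul_le_mul_of_nonpos_right hclb hL.le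
        _ = Real.log x := one_mul _
    have hle : s q ≤ sstar := by
      by_contra hcon
      push_neg at hcon
      have := Gstrict hstar1 hcon (by linarith)
      rw [hGstar] at this
      linarith
    linarith
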